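/- Let (S,d) be a complete separable metric space, (Ω,ℱ,P) a probability space with a filtration (ℱ_t)_{t≥0}, A a set of continuous functions S → ℝ, and suppose to each φ ∈ A is assigned a continuous function 𝓛φ : S → ℝ. Let η = (η_t)_{t≥0} be an S-valued process, jointly measurable in (t,ω) and adapted to (ℱ_t), whose sample paths are càdlàg (right-continuous with left limits), and assume that for every φ ∈ A and T ≥ 0 the process T ↦ φ(η_T) − φ(η_0) − ∫₀^T 𝓛φ(η_s) ds is a well-defined (ℱ_t)-martingale (in particular the Lebesgue integral exists and is integrable). Fix T ≥ 0 and continuous functions g, g', h : [0,T] × S → ℝ such that: (i) sup_{t₁,t₂∈[0,T]} E[|g(t₁,η_{t₂})|] < ∞; (ii) for every ζ ∈ S and t ∈ [0,T], the function t' ↦ g(t',ζ) is differentiable at t with derivative g'(t,ζ); (iii) for every t ∈ [0,T], g(t,·) ∈ A and 𝓛(g(t,·)) = h(t,·); (iv) sup_{t₁,t₂∈[0,T]} E[g'(t₁,η_{t₂})² + h(t₁,η_{t₂})²] < ∞. Then the process t ↦ g(t∧T, η_{t∧T}) − g(0,η_0) − ∫₀^{t∧T} (g'(s,η_s) + h(s,η_s))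 ds, t ≥ 0, is an (ℱ_t)-martingale. -/

import Mathlib

open MeasureTheory Filter Set Topology
open scoped ENNReal NNReal

set_option maxHeartbeats 2000000

namespace StochasticChainRule

/-- The compensated process `T ↦ φ(η_T) − φ(η_0) − ∫₀^T ψ(η_s) ds` associated with a test
function `φ` and its generator value `ψ = 𝓛φ`. -/
noncomputable def comp {S Ω : Type*} (φ ψ : S → ℝ) (η : ℝ → Ω → S) (t : ℝ) (ω : Ω) : ℝ :=
  φ (η t ω) - φ (η 0 ω) - ∫ s in Ioc (0 : ℝ) t, ψ (η s ω)

/-- `M` is an `(ℱ_t)_{t ≥ 0}`-martingale: adapted, integrable, and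
`E[M_{t₂} | ℱ_{t₁}] = M_{t₁}` a.s. for all `0 ≤ t₁ ≤ t₂`. -/
def IsMartOn {Ω : Type*} {m0 : MeasurableSpace Ω} (ℱ : Filtration ℝ m0) (P : Measure Ω)
    (M : ℝ → Ω → ℝ) : Prop :=
  (∀ t : ℝ, 0 ≤ t → Measurable[ℱ t] (M t)) ∧
  (∀ t : ℝ, 0 ≤ t → Integrable (M t) P) ∧
  (∀ t₁ t₂ : ℝ, 0 ≤ t₁ → t₁ ≤ t₂ → P[M t₂|ℱ t₁] =ᵐ[P] M t₁)


theorem aux_ceil_tendsto (s : ℝ) :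
    Tendsto (fun n : ℕ => ((⌈s * 2 ^ n⌉ : ℤ) : ℝ) / 2 ^ n) atTop (𝓝[Ici s] s) := by
  apply tendsto_nhdsWithin_of_tendsto_nhds_of_eventually_within
  · apply tendsto_of_tendsto_of_tendsto_of_le_of_le (g := fun _ : ℕ => s)
      (h := fun n : ℕ => s + (2 : ℝ)⁻¹ ^ n) tendsto_const_nhds
    · have : Tendsto (fun n : ℕ => (2 : ℝ)⁻¹ ^ n) atTop (𝓝 0) :=
        tendsto_pow_atTop_nhds_zero_of_lt_one (by norm_num) (by norm_num)
      simpa using tendsto_const_nhds.add this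
    · intro n
      rw [le_div_iff₀ (by positivity)]
      exact Int.le_ceil _
    · intro n
      rw [div_le_iff₀ (by positivity)]
      have := Int.ceil_lt_add_one (s * 2 ^ n)
      have h2 : (s + (2 : ℝ)⁻¹ ^ n) * 2 ^ n = s * 2 ^ n + 1 := by
        rw [add_mul, ← mul_pow, inv_mul_cancel₀ (by norm_num : (2:ℝ) ≠ 0), one_pow]
      linarith
  · filter_upwards with n
    rw [mem_Ici, le_div_iff₀ (by positivity)]
    exact Int.le_ceil _

theorem measurable_of_rightCont {X : Type*} [TopologicalSpace X]
    [TopologicalSpace.PseudoMetrizableSpace X] [MeasurableSpace X] [BorelSpace X] {f : ℝ → X}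
    (hf : ∀ s : ℝ, ContinuousWithinAt f (Ici s) s) : Measurable f := by
  have key : ∀ n : ℕ, Measurable (fun s : ℝ => f ((⌈s * 2 ^ n⌉ : ℤ) / 2 ^ n)) := by
    intro n
    exact (measurable_from_top (f := fun k : ℤ => f (k / 2 ^ n))).comp
      (Int.measurable_ceil.comp (measurable_id.mul_const _))
  apply measurable_of_tendsto_metrizable key
  rw [tendsto_pi_nhds]
  intro s
  exact (hf s).tendsto.comp (aux_ceil_tendsto s)



theorem rc_clamp {S : Type*} [TopologicalSpace S] (f : ℝ → S) (c : ℝ) (hc : 0 ≤ c)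
    (hrc : ∀ s, 0 ≤ s → ContinuousWithinAt f (Ici s) s) :
    ∀ s : ℝ, ContinuousWithinAt (fun r => f (min c (max 0 r))) (Ici s) s := by
  intro s
  set j : ℝ → ℝ := fun r => min c (max 0 r) with hj
  have hjc : Continuous j := continuous_const.min (continuous_const.max continuous_id)
  have hjmono : Monotone j := fun x y hxy =>
    min_le_min le_rfl (max_le_max le_rfl hxy)
  have hjs : 0 ≤ j s := le_min hc (le_max_left _ _)
  have h1 : Tendsto j (𝓝[Ici s] s) (𝓝[Ici (j s)] (j s)) :=
    hjc.continuousWithinAt.tendsto_nhdsWithin (fun x hx => hjmono hx)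
  exact ((hrc (j s) hjs).tendsto.comp h1 : _)

theorem bounded_on_path {S : Type*} [MetricSpace S] (f : ℝ → S) (T : ℝ)
    (hrc : ∀ s, 0 ≤ s → ContinuousWithinAt f (Ici s) s)
    (hll : ∀ s, 0 < s → ∃ l, Tendsto f (𝓝[Iio s] s) (𝓝 l))
    (Φ : ℝ × S → ℝ) (hΦ : Continuous Φ) :
    ∃ M : ℝ, ∀ a ∈ Icc (0:ℝ) T, ∀ b ∈ Icc (0:ℝ) T, |Φ (a, f b)| ≤ M := by
  by_contra hcon
  push_neg at hcon
  choose a ha b hb hM using fun n : ℕ => hcon n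
  obtain ⟨⟨p, q⟩, hpq, φ, hφmono, hφtend⟩ :=
    (isCompact_Icc.prod isCompact_Icc).tendsto_subseq
      (x := fun n => (a n, b n)) (fun n => ⟨ha n, hb n⟩)
  obtain ⟨hp, hq⟩ : p ∈ Icc (0:ℝ) T ∧ q ∈ Icc (0:ℝ) T := hpq
  have hαtend : Tendsto (fun n => a (φ n)) atTop (𝓝 p) :=
    (continuous_fst.tendsto _).comp hφtend
  have hβtend : Tendsto (fun n => b (φ n)) atTop (𝓝 q) :=
    (continuous_snd.tendsto _).comp hφtend
  -- helper to derive a contradiction from convergence along a further subsequence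
  have contra : ∀ (ψ : ℕ → ℕ), StrictMono ψ → ∀ (x : ℝ),
      Tendsto (fun m => Φ (a (φ (ψ m)), f (b (φ (ψ m))))) atTop (𝓝 x) → False := by
    intro ψ hψ x hx
    have habs : Tendsto (fun m => |Φ (a (φ (ψ m)), f (b (φ (ψ m))))|) atTop (𝓝 |x|) :=
      hx.abs
    have hev : ∀ᶠ m in atTop, |Φ (a (φ (ψ m)), f (b (φ (ψ m))))| ≤ |x| + 1 := by
      filter_upwards [habs.eventually (eventually_le_nhds (by linarith : |x| < |x| + 1))]
        with m hm using hm
    obtain ⟨m₀, hm₀⟩ := hev.exists_forall_of_atTop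
    obtain ⟨m₁, hm₁⟩ := exists_nat_ge (|x| + 1)
    set m := max m₀ m₁
    have h1 : |Φ (a (φ (ψ m)), f (b (φ (ψ m))))| ≤ |x| + 1 := hm₀ m (le_max_left _ _)
    have h2 : ((φ (ψ m) : ℝ)) < |Φ (a (φ (ψ m)), f (b (φ (ψ m))))| := hM _
    have h3 : (m : ℝ) ≤ (φ (ψ m) : ℝ) := by
      exact_mod_cast le_trans (hψ.le_apply) (hφmono.le_apply)
    have h4 : (m₁ : ℝ) ≤ (m : ℝ) := by exact_mod_cast le_max_right m₀ m₁
    linarith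
  by_cases hfreq : ∃ᶠ n in atTop, q ≤ b (φ n)
  · obtain ⟨ψ, hψmono, hψ⟩ := Filter.extraction_of_frequently_atTop hfreq
    have hβψ : Tendsto (fun m => b (φ (ψ m))) atTop (𝓝[Ici q] q) := by
      apply tendsto_nhdsWithin_of_tendsto_nhds_of_eventually_within
      · exact hβtend.comp hψmono.tendsto_atTop
      · exact Eventually.of_forall fun m => hψ m
    have hfq : Tendsto (fun m => f (b (φ (ψ m)))) atTop (𝓝 (f q)) :=
      (hrc q hq.1).tendsto.comp hβψ
    have : Tendsto (fun m => Φ (a (φ (ψ m)), f (b (φ (ψ m))))) atTop (𝓝 (Φ (p, f q))) :=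
      (hΦ.tendsto _).comp (((hαtend.comp hψmono.tendsto_atTop)).prodMk_nhds hfq)
    exact contra ψ hψmono _ this
  · rw [Filter.not_frequently] at hfreq
    have hfreq' : ∀ᶠ n in atTop, b (φ n) < q := by
      filter_upwards [hfreq] with n hn using lt_of_not_ge hn
    have hq0 : 0 < q := by
      obtain ⟨n, hn⟩ := hfreq'.exists
      exact lt_of_le_of_lt (hb (φ n)).1 hn
    obtain ⟨l, hl⟩ := hll q hq0
    have hβq : Tendsto (fun n => b (φ n)) atTop (𝓝[Iio q] q) :=
      tendsto_nhdsWithin_of_tendsto_nhds_of_eventually_within _ hβtend hfreq'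
    have hfl : Tendsto (fun n => f (b (φ n))) atTop (𝓝 l) := hl.comp hβq
    have : Tendsto (fun n => Φ (a (φ n), f (b (φ n)))) atTop (𝓝 (Φ (p, l))) :=
      (hΦ.tendsto _).comp (hαtend.prodMk_nhds hfl)
    exact contra id strictMono_id _ (by simpa using this)



theorem vitali_l2 {Ω : Type*} {m0 : MeasurableSpace Ω} (P : Measure Ω) [IsProbabilityMeasure P]
    (X : ℕ → Ω → ℝ) (hmeas : ∀ n, AEMeasurable (X n) P)
    (h0 : ∀ᵐ ω ∂P, Tendsto (fun n => X n ω) atTop (𝓝 0))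
    (B : ℝ≥0∞) (hB : B ≠ ∞) (hsq : ∀ n, (∫⁻ ω, ENNReal.ofReal ((X n ω) ^ 2) ∂P) ≤ B) :
    Tendsto (fun n => ∫⁻ ω, ENNReal.ofReal |X n ω| ∂P) atTop (𝓝 0) := by
  set a : ℕ → Ω → ℝ≥0∞ := fun n ω => ENNReal.ofReal |X n ω| with ha
  have hameas : ∀ n, AEMeasurable (a n) P := fun n =>
    ENNReal.measurable_ofReal.comp_aemeasurable (continuous_abs.measurable.comp_aemeasurable (hmeas n))
  have key : ∀ (x : ℝ≥0∞) (k : ℕ), 1 ≤ k → x ≤ min x k + x ^ 2 / k := by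
    intro x k hk
    rcases le_total x k with hxk | hkx
    · rw [min_eq_left hxk]; exact le_self_add
    · refine le_add_of_nonneg_of_le (zero_le) ?_
      rw [ENNReal.le_div_iff_mul_le (Or.inl (by exact_mod_cast (Nat.pos_of_ne_zero (by omega)).ne'))
        (Or.inl (by simp))]
      rw [pow_two]
      exact mul_le_mul_right hkx x
  have hsq' : ∀ n ω, ENNReal.ofReal ((X n ω) ^ 2) = (a n ω) ^ 2 := by
    intro n ω
    rw [ha]
    simp only []
    rw [← ENNReal.ofReal_pow (abs_nonneg _), sq_abs]
  have step : ∀ (k : ℕ), 1 ≤ k → ∀ n,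
      ∫⁻ ω, a n ω ∂P ≤ (∫⁻ ω, min (a n ω) k ∂P) + B / k := by
    intro k hk n
    calc ∫⁻ ω, a n ω ∂P ≤ ∫⁻ ω, (min (a n ω) k + (a n ω) ^ 2 / k) ∂P :=
          lintegral_mono fun ω => key _ k hk
      _ = (∫⁻ ω, min (a n ω) k ∂P) + ∫⁻ ω, (a n ω) ^ 2 / k ∂P :=
          lintegral_add_left' ((hameas n).min aemeasurable_const) _
      _ ≤ (∫⁻ ω, min (a n ω) k ∂P) + B / k := by
          gcongr
          have : ∀ ω, (a n ω) ^ 2 / k = (a n ω) ^ 2 * (k : ℝ≥0∞)⁻¹ := fun ω => by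
            rw [div_eq_mul_inv]
          simp_rw [this]
          rw [lintegral_mul_const'' _ ((hameas n).pow_const 2), ← div_eq_mul_inv]
          gcongr
          calc ∫⁻ ω, a n ω ^ 2 ∂P = ∫⁻ ω, ENNReal.ofReal ((X n ω) ^ 2) ∂P := by
                simp_rw [hsq']
            _ ≤ B := hsq n
  have hDCT : ∀ k : ℕ, Tendsto (fun n => ∫⁻ ω, min (a n ω) k ∂P) atTop (𝓝 0) := by
    intro k
    have h0' : ∀ᵐ ω ∂P, Tendsto (fun n => min (a n ω) k) atTop (𝓝 0) := by
      filter_upwards [h0] with ω hω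
      have : Tendsto (fun n => a n ω) atTop (𝓝 0) := by
        have h2 : Tendsto (fun n => |X n ω|) atTop (𝓝 (0:ℝ)) := by
          simpa using hω.abs
        have := (ENNReal.continuous_ofReal.tendsto 0).comp h2
        simpa [ha, Function.comp_def] using this
      exact tendsto_of_tendsto_of_tendsto_of_le_of_le tendsto_const_nhds this
        (fun n => zero_le) (fun n => min_le_left _ _)
    have := tendsto_lintegral_of_dominated_convergence' (bound := fun _ => (k : ℝ≥0∞))
      (fun n => (hameas n).min aemeasurable_const)
      (fun n => Eventually.of_forall fun ω => min_le_right _ _)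
      (by simp) h0'
    simpa using this
  have hlimsup : ∀ k : ℕ, 1 ≤ k →
      limsup (fun n => ∫⁻ ω, a n ω ∂P) atTop ≤ B / k := by
    intro k hk
    have h1 : limsup (fun n => ∫⁻ ω, a n ω ∂P) atTop ≤
        limsup (fun n => (∫⁻ ω, min (a n ω) k ∂P) + B / k) atTop :=
      limsup_le_limsup (Eventually.of_forall (step k hk))
    have h2 : Tendsto (fun n => (∫⁻ ω, min (a n ω) k ∂P) + B / k) atTop (𝓝 (0 + B / k)) :=
      (hDCT k).add tendsto_const_nhds
    rw [h2.limsup_eq] at h1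
    simpa using h1
  have hdiv : Tendsto (fun k : ℕ => B / k) atTop (𝓝 0) := by
    simp_rw [ENNReal.div_eq_inv_mul]
    have := ENNReal.Tendsto.const_mul (a := B) ENNReal.tendsto_inv_nat_nhds_zero
      (Or.inr hB)
    simp only [mul_zero] at this
    exact this.congr (fun k => by rw [mul_comm])
  have hL : limsup (fun n => ∫⁻ ω, a n ω ∂P) atTop ≤ 0 := by
    refine ge_of_tendsto hdiv ?_
    filter_upwards [eventually_ge_atTop 1] with k hk using hlimsup k hk
  exact tendsto_of_le_liminf_of_limsup_le bot_le hL






theorem clamp_ceil_tendsto (u : ℝ) (s : ℝ) (hs : 0 ≤ s) (hsu : s ≤ u) :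
    Tendsto (fun n : ℕ => min u (max 0 (((⌈s * 2 ^ n⌉ : ℤ) : ℝ) / 2 ^ n))) atTop
      (𝓝[Ici s] s) := by
  have hle : ∀ n : ℕ, s ≤ ((⌈s * 2 ^ n⌉ : ℤ) : ℝ) / 2 ^ n := by
    intro n
    rw [le_div_iff₀ (by positivity)]
    exact Int.le_ceil _
  apply tendsto_nhdsWithin_of_tendsto_nhds_of_eventually_within
  · apply tendsto_of_tendsto_of_tendsto_of_le_of_le (g := fun _ : ℕ => s)
      (h := fun n : ℕ => ((⌈s * 2 ^ n⌉ : ℤ) : ℝ) / 2 ^ n) tendsto_const_nhds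
    · have h2 := aux_ceil_tendsto s
      exact h2.mono_right nhdsWithin_le_nhds
    · intro n
      exact le_min hsu (le_max_of_le_right (hle n))
    · intro n
      have h0 : (0:ℝ) ≤ ((⌈s * 2 ^ n⌉ : ℤ) : ℝ) / 2 ^ n := le_trans hs (hle n)
      calc min u (max 0 (((⌈s * 2 ^ n⌉ : ℤ) : ℝ) / 2 ^ n))
          ≤ max 0 (((⌈s * 2 ^ n⌉ : ℤ) : ℝ) / 2 ^ n) := min_le_right _ _
        _ = ((⌈s * 2 ^ n⌉ : ℤ) : ℝ) / 2 ^ n := max_eq_right h0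
  · filter_upwards with n
    exact le_min hsu (le_max_of_le_right (hle n))

theorem meas_integral_process {S Ω : Type*} [MetricSpace S] [MeasurableSpace S] [BorelSpace S]
    {mΩ : MeasurableSpace Ω} (η : ℝ → Ω → S) (u : ℝ) (hu : 0 ≤ u)
    (hmeas : ∀ r : ℝ, 0 ≤ r → r ≤ u → Measurable[mΩ] (η r))
    (hrc : ∀ ω, ∀ s : ℝ, 0 ≤ s → ContinuousWithinAt (fun r => η r ω) (Ici s) s)
    (Φ : ℝ × S → ℝ) (hΦ : Continuous Φ)
    (hbdd : ∀ ω, ∃ M : ℝ, ∀ r ∈ Icc (0:ℝ) u, |Φ (r, η r ω)| ≤ M) :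
    Measurable[mΩ] (fun ω => ∫ s in Ioc (0:ℝ) u, Φ (s, η s ω)) := by
  set j : ℕ → ℤ → ℝ := fun n k => min u (max 0 ((k : ℝ) / 2 ^ n)) with hj
  have hjmem : ∀ n k, j n k ∈ Icc (0:ℝ) u := fun n k =>
    ⟨le_min hu (le_max_left _ _), min_le_left _ _⟩
  set f : ℕ → ℝ × Ω → ℝ := fun n p => Φ (j n ⌈p.1 * 2 ^ n⌉, η (j n ⌈p.1 * 2 ^ n⌉) p.2) with hf
  have hfmeas : ∀ n, Measurable[MeasurableSpace.prod (borel ℝ) mΩ] (f n) := by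
    intro n
    have hG : Measurable[MeasurableSpace.prod mΩ ⊤] (fun q : Ω × ℤ =>
        Φ (j n q.2, η (j n q.2) q.1)) := by
      apply measurable_from_prod_countable_left
      intro k
      have : Measurable[mΩ] fun x : Ω => Φ (j n k, η (j n k) x) :=
        hΦ.measurable.comp (measurable_const.prodMk (hmeas (j n k) (hjmem n k).1 (hjmem n k).2))
      exact this
    have hc : Measurable[MeasurableSpace.prod (borel ℝ) mΩ]
        (fun p : ℝ × Ω => (p.2, ⌈p.1 * 2 ^ n⌉)) := by
      borelize ℝ
      exact measurable_snd.prodMk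
        (Int.measurable_ceil.comp (measurable_fst.mul_const _))
    exact hG.comp hc
  have hlim : ∀ ω, Tendsto (fun n => ∫ s in Ioc (0:ℝ) u, f n (s, ω)) atTop
      (𝓝 (∫ s in Ioc (0:ℝ) u, Φ (s, η s ω))) := by
    intro ω
    obtain ⟨M, hM⟩ := hbdd ω
    apply tendsto_integral_of_dominated_convergence (bound := fun _ => M)
    · intro n
      borelize ℝ
      exact ((hfmeas n).comp (measurable_id.prodMk measurable_const)).aestronglyMeasurable
    · haveI : IsFiniteMeasure (volume.restrict (Ioc (0:ℝ) u)) :=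
        ⟨by rw [Measure.restrict_apply_univ, Real.volume_Ioc]; exact ENNReal.ofReal_lt_top⟩
      exact integrable_const M
    · intro n
      filter_upwards with s
      exact hM _ (hjmem n _)
    · filter_upwards [ae_restrict_mem measurableSet_Ioc] with s hs
      have h1 : Tendsto (fun n : ℕ => j n ⌈s * 2 ^ n⌉) atTop (𝓝[Ici s] s) :=
        clamp_ceil_tendsto u s hs.1.le hs.2
      have h2 : Tendsto (fun n : ℕ => η (j n ⌈s * 2 ^ n⌉) ω) atTop (𝓝 (η s ω)) :=
        (hrc ω s hs.1.le).tendsto.comp h1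
      exact (hΦ.tendsto _).comp ((h1.mono_right nhdsWithin_le_nhds).prodMk_nhds h2)
  have hInmeas : ∀ n, Measurable[mΩ] (fun ω => ∫ s in Ioc (0:ℝ) u, f n (s, ω)) := by
    intro n
    letI : MeasurableSpace ℝ := borel ℝ
    haveI : BorelSpace ℝ := ⟨rfl⟩
    exact ((hfmeas n).stronglyMeasurable.integral_prod_left').measurable
  exact measurable_of_tendsto_metrizable hInmeas (tendsto_pi_nhds.2 hlim)


theorem sum_setIntegral_Ioc (f : ℝ → ℝ) (s : ℕ → ℝ) (hmono : Monotone s) (m : ℕ)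
    (hint : IntegrableOn f (Ioc (s 0) (s m)) volume) :
    ∑ k ∈ Finset.range m, ∫ r in Ioc (s k) (s (k + 1)), f r = ∫ r in Ioc (s 0) (s m), f r := by
  induction m with
  | zero => simp
  | succ m ih =>
    have hsub1 : Ioc (s 0) (s m) ⊆ Ioc (s 0) (s (m + 1)) :=
      Ioc_subset_Ioc le_rfl (hmono (Nat.le_succ m))
    have hsub2 : Ioc (s m) (s (m + 1)) ⊆ Ioc (s 0) (s (m + 1)) :=
      Ioc_subset_Ioc (hmono (Nat.zero_le m)) le_rfl
    have hdisj : Disjoint (Ioc (s 0) (s m)) (Ioc (s m) (s (m + 1))) := by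
      rw [Set.Ioc_disjoint_Ioc]
      exact (min_le_left _ _).trans (le_max_right _ _)
    rw [Finset.sum_range_succ, ih (hint.mono_set hsub1),
      ← setIntegral_union hdisj measurableSet_Ioc (hint.mono_set hsub1) (hint.mono_set hsub2),
      Ioc_union_Ioc_eq_Ioc (hmono (Nat.zero_le m)) (hmono (Nat.le_succ m))]

theorem statement9
    {S : Type*} [MetricSpace S] [CompleteSpace S] [TopologicalSpace.SeparableSpace S]
    [MeasurableSpace S] [BorelSpace S]
    {Ω : Type*} {m0 : MeasurableSpace Ω} (P : Measure Ω) [IsProbabilityMeasure P]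
    (ℱ : Filtration ℝ m0)
    (A : Set (S → ℝ)) (hA : ∀ φ ∈ A, Continuous φ)
    (Gen : (S → ℝ) → S → ℝ) (hGen : ∀ φ ∈ A, Continuous (Gen φ))
    (η : ℝ → Ω → S)
    (hη_jointly_meas : Measurable (Function.uncurry η))
    (hη_adapted : ∀ t : ℝ, 0 ≤ t → Measurable[ℱ t] (η t))
    (hη_right_cont : ∀ ω : Ω, ∀ t : ℝ, 0 ≤ t →
      ContinuousWithinAt (fun s => η s ω) (Ici t) t)
    (hη_left_lim : ∀ ω : Ω, ∀ t : ℝ, 0 < t →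
      ∃ l : S, Tendsto (fun s => η s ω) (nhdsWithin t (Iio t)) (nhds l))
    (hwell_defined : ∀ φ ∈ A, ∀ T : ℝ, 0 ≤ T →
      ∀ᵐ ω ∂P, IntegrableOn (fun s => Gen φ (η s ω)) (Ioc (0 : ℝ) T) volume)
    (hmart : ∀ φ ∈ A, IsMartOn ℱ P (comp φ (Gen φ) η))
    (T : ℝ) (hT : 0 ≤ T)
    (g g' h : ℝ → S → ℝ)
    (hg_cont : ContinuousOn (fun q : ℝ × S => g q.1 q.2) (Icc 0 T ×ˢ (univ : Set S)))
    (hg'_cont : ContinuousOn (fun q : ℝ × S => g' q.1 q.2) (Icc 0 T ×ˢ (univ : Set S)))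
    (hh_cont : ContinuousOn (fun q : ℝ × S => h q.1 q.2) (Icc 0 T ×ˢ (univ : Set S)))
    (hI : ∃ C : ℝ, ∀ t₁ ∈ Icc (0 : ℝ) T, ∀ t₂ ∈ Icc (0 : ℝ) T,
      (∫⁻ ω, ENNReal.ofReal |g t₁ (η t₂ ω)| ∂P) ≤ ENNReal.ofReal C)
    (hII : ∀ ζ : S, ∀ t ∈ Icc (0 : ℝ) T, HasDerivAt (fun t' => g t' ζ) (g' t ζ) t)
    (hIII : ∀ t ∈ Icc (0 : ℝ) T,
      (fun ζ => g t ζ) ∈ A ∧ Gen (fun ζ => g t ζ) = fun ζ => h t ζ)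
    (hIV : ∃ C : ℝ, ∀ t₁ ∈ Icc (0 : ℝ) T, ∀ t₂ ∈ Icc (0 : ℝ) T,
      (∫⁻ ω, ENNReal.ofReal (g' t₁ (η t₂ ω) ^ 2 + h t₁ (η t₂ ω) ^ 2) ∂P) ≤
        ENNReal.ofReal C) :
    IsMartOn ℱ P (fun t ω =>
      g (min t T) (η (min t T) ω) - g 0 (η 0 ω) -
        ∫ s in Ioc (0 : ℝ) (min t T), (g' s (η s ω) + h s (η s ω))) := by
  obtain ⟨C₁, hC₁⟩ := hI
  obtain ⟨C₂, hC₂⟩ := hIV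
  clear hwell_defined hA hGen
  -- the clamp to [0, T]
  set cl : ℝ → ℝ := fun r => min T (max 0 r) with hcl_def
  have hcl_cont : Continuous cl := continuous_const.min (continuous_const.max continuous_id)
  have hcl_mem : ∀ r, cl r ∈ Icc (0:ℝ) T := fun r => ⟨le_min hT (le_max_left _ _), min_le_left _ _⟩
  have hcl_eq : ∀ r ∈ Icc (0:ℝ) T, cl r = r := by
    intro r hr
    rw [hcl_def]
    simp only [max_eq_right hr.1, min_eq_right hr.2]
  -- total continuous versions of g, g', h
  set G : ℝ × S → ℝ := fun q => g (cl q.1) q.2 with hG_def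
  set G' : ℝ × S → ℝ := fun q => g' (cl q.1) q.2 with hG'_def
  set H : ℝ × S → ℝ := fun q => h (cl q.1) q.2 with hH_def
  have hclprod : Continuous (fun q : ℝ × S => (cl q.1, q.2)) :=
    (hcl_cont.comp continuous_fst).prodMk continuous_snd
  have hmemprod : ∀ q : ℝ × S, (cl q.1, q.2) ∈ Icc (0:ℝ) T ×ˢ (univ : Set S) :=
    fun q => ⟨hcl_mem q.1, mem_univ _⟩
  have hGcont : Continuous G := hg_cont.comp_continuous hclprod hmemprod
  have hG'cont : Continuous G' := hg'_cont.comp_continuous hclprod hmemprod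
  have hHcont : Continuous H := hh_cont.comp_continuous hclprod hmemprod
  -- per-omega path regularity
  have hrc : ∀ ω, ∀ s : ℝ, 0 ≤ s → ContinuousWithinAt (fun r => η r ω) (Ici s) s :=
    fun ω s hs => hη_right_cont ω s hs
  have hpath_meas : ∀ ω, Measurable fun s => η (cl s) ω := fun ω =>
    measurable_of_rightCont (rc_clamp (fun r => η r ω) T hT (hrc ω))
  have hbddΦ : ∀ (Φ : ℝ × S → ℝ), Continuous Φ → ∀ ω, ∃ M : ℝ,
      ∀ a ∈ Icc (0:ℝ) T, ∀ b ∈ Icc (0:ℝ) T, |Φ (a, η b ω)| ≤ M :=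
    fun Φ hΦ ω => bounded_on_path (fun s => η s ω) T (hrc ω)
      (fun s hs => hη_left_lim ω s hs) Φ hΦ
  have hη_meas : ∀ r : ℝ, 0 ≤ r → Measurable (η r) := fun r hrr =>
    (hη_adapted r hrr).mono (ℱ.le r) le_rfl
  have finIoc : ∀ a b : ℝ, IsFiniteMeasure (volume.restrict (Ioc a b)) := fun a b =>
    ⟨by rw [Measure.restrict_apply_univ, Real.volume_Ioc]; exact ENNReal.ofReal_lt_top⟩
  -- generic integrability of path integrands
  have hINT : ∀ (Φ : ℝ × S → ℝ), Continuous Φ → ∀ (θ₁ θ₂ : ℝ → ℝ),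
      Measurable θ₁ → Measurable θ₂ → ∀ (a b : ℝ),
      (∀ r ∈ Ioc a b, θ₁ r ∈ Icc (0:ℝ) T ∧ θ₂ r ∈ Icc (0:ℝ) T) → ∀ ω,
      IntegrableOn (fun r => Φ (θ₁ r, η (θ₂ r) ω)) (Ioc a b) volume := by
    intro Φ hΦ θ₁ θ₂ hθ₁ hθ₂ a b hmem ω
    obtain ⟨M, hM⟩ := hbddΦ Φ hΦ ω
    have hmeas : Measurable fun r => Φ (θ₁ r, η (cl (θ₂ r)) ω) :=
      hΦ.measurable.comp (hθ₁.prodMk ((hpath_meas ω).comp hθ₂))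
    have heq : EqOn (fun r => Φ (θ₁ r, η (cl (θ₂ r)) ω))
        (fun r => Φ (θ₁ r, η (θ₂ r) ω)) (Ioc a b) := by
      intro r hr
      simp only [hcl_eq _ (hmem r hr).2]
    refine IntegrableOn.congr_fun ?_ heq measurableSet_Ioc
    haveI := finIoc a b
    refine ⟨hmeas.aestronglyMeasurable, ?_⟩
    apply HasFiniteIntegral.of_bounded (C := M)
    filter_upwards [ae_restrict_mem measurableSet_Ioc] with r hr
    rw [Real.norm_eq_abs, hcl_eq _ (hmem r hr).2]
    exact hM _ (hmem r hr).1 _ (hmem r hr).2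
  -- part 1 : adaptedness
  have part1 : ∀ t : ℝ, 0 ≤ t → Measurable[ℱ t] (fun ω =>
      g (min t T) (η (min t T) ω) - g 0 (η 0 ω) -
        ∫ s in Ioc (0 : ℝ) (min t T), (g' s (η s ω) + h s (η s ω))) := by
    intro t ht
    set u := min t T with hu_def
    have hu0 : 0 ≤ u := le_min ht hT
    have huT : u ≤ T := min_le_right _ _
    have hut : u ≤ t := min_le_left _ _
    have h1 : Measurable[ℱ t] fun ω => g u (η u ω) := by
      have : Measurable[ℱ t] (η u) := (hη_adapted u hu0).mono (ℱ.mono hut) le_rfl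
      have hgu : Continuous (fun ζ => g u ζ) := by
        have hcomp := hGcont.comp (Continuous.prodMk_right u)
        simp only [hG_def, Function.comp_def] at hcomp
        rwa [hcl_eq u ⟨hu0, huT⟩] at hcomp
      exact hgu.measurable.comp this
    have h2 : Measurable[ℱ t] fun ω => g 0 (η 0 ω) := by
      have : Measurable[ℱ t] (η 0) := (hη_adapted 0 le_rfl).mono (ℱ.mono ht) le_rfl
      have hg0 : Continuous (fun ζ => g 0 ζ) := by
        have hcomp := hGcont.comp (Continuous.prodMk_right (0:ℝ))
        simp only [hG_def, Function.comp_def] at hcomp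
        rwa [hcl_eq 0 ⟨le_rfl, hT⟩] at hcomp
      exact hg0.measurable.comp this
    have h3 : Measurable[ℱ t] fun ω =>
        ∫ s in Ioc (0 : ℝ) u, (g' s (η s ω) + h s (η s ω)) := by
      have key := meas_integral_process (mΩ := ℱ u) η u hu0
        (fun r hr0 hru => (hη_adapted r hr0).mono (ℱ.mono hru) le_rfl) hrc
        (fun q => G' q + H q) (hG'cont.add hHcont)
        (fun ω => by
          obtain ⟨M₁, hM₁⟩ := hbddΦ G' hG'cont ω
          obtain ⟨M₂, hM₂⟩ := hbddΦ H hHcont ω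
          refine ⟨M₁ + M₂, fun r hr => ?_⟩
          have hr' : r ∈ Icc (0:ℝ) T := ⟨hr.1, hr.2.trans huT⟩
          exact (abs_add_le _ _).trans (add_le_add (hM₁ r hr' r hr') (hM₂ r hr' r hr')))
      have hcongr : (fun ω => ∫ s in Ioc (0 : ℝ) u, (G' (s, η s ω) + H (s, η s ω))) =
          (fun ω => ∫ s in Ioc (0 : ℝ) u, (g' s (η s ω) + h s (η s ω))) := by
        funext ω
        apply setIntegral_congr_fun measurableSet_Ioc
        intro s hs
        have hs' : s ∈ Icc (0:ℝ) T := ⟨hs.1.le, hs.2.trans huT⟩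
        simp only [hG'_def, hH_def, hcl_eq _ hs']
      rw [← hcongr]
      exact key.mono (ℱ.mono hut) le_rfl
    exact (h1.sub h2).sub h3

  -- elementary inequality
  have habs_sq : ∀ a b : ℝ, |a + b| ≤ a ^ 2 + b ^ 2 + 1 := by
    intro a b
    have h1 := abs_add_le a b
    have h2 : 2 * |a| ≤ a ^ 2 + 1 := by nlinarith [sq_nonneg (|a| - 1), sq_abs a]
    have h3 : 2 * |b| ≤ b ^ 2 + 1 := by nlinarith [sq_nonneg (|b| - 1), sq_abs b]
    nlinarith [abs_nonneg a, abs_nonneg b]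
  -- integrability of g(v, η_v)
  have hg_int : ∀ v ∈ Icc (0:ℝ) T, Integrable (fun ω => g v (η v ω)) P := by
    intro v hv
    have hgv : Continuous (fun ζ => g v ζ) := by
      have hcomp := hGcont.comp (Continuous.prodMk_right v)
      simp only [hG_def, Function.comp_def] at hcomp
      rwa [hcl_eq v hv] at hcomp
    refine ⟨(hgv.measurable.comp (hη_meas v hv.1)).aestronglyMeasurable, ?_⟩
    rw [hasFiniteIntegral_iff_norm]
    refine lt_of_le_of_lt ?_ (ENNReal.ofReal_lt_top (r := C₁))
    simpa only [Real.norm_eq_abs] using hC₁ v hv v hv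
  -- integrability on Ioc 0 u of the raw integrand, for every ω
  have hFIntOn : ∀ u : ℝ, 0 ≤ u → u ≤ T → ∀ ω,
      IntegrableOn (fun s => g' s (η s ω) + h s (η s ω)) (Ioc (0:ℝ) u) volume := by
    intro u hu0 huT ω
    have hi := hINT (fun q => G' q + H q) (hG'cont.add hHcont) id id measurable_id measurable_id
      0 u (fun r hr => ⟨⟨hr.1.le, hr.2.trans huT⟩, ⟨hr.1.le, hr.2.trans huT⟩⟩) ω
    refine hi.congr_fun ?_ measurableSet_Ioc
    intro s hs
    simp only [hG'_def, hH_def, id_eq, hcl_eq _ ⟨hs.1.le, hs.2.trans huT⟩]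
  -- the time-integral term is integrable in ω
  have hTI_int : ∀ u : ℝ, 0 ≤ u → u ≤ T → Integrable (fun ω =>
      ∫ s in Ioc (0:ℝ) u, (g' s (η s ω) + h s (η s ω))) P := by
    intro u hu0 huT
    constructor
    · have key := meas_integral_process (mΩ := m0) η u hu0
        (fun r hr0 _ => hη_meas r hr0) hrc
        (fun q => G' q + H q) (hG'cont.add hHcont)
        (fun ω => by
          obtain ⟨M₁, hM₁⟩ := hbddΦ G' hG'cont ω
          obtain ⟨M₂, hM₂⟩ := hbddΦ H hHcont ω
          refine ⟨M₁ + M₂, fun r hr => ?_⟩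
          have hr' : r ∈ Icc (0:ℝ) T := ⟨hr.1, hr.2.trans huT⟩
          exact (abs_add_le _ _).trans (add_le_add (hM₁ r hr' r hr') (hM₂ r hr' r hr')))
      have hcongr : (fun ω => ∫ s in Ioc (0 : ℝ) u, (G' (s, η s ω) + H (s, η s ω))) =
          (fun ω => ∫ s in Ioc (0 : ℝ) u, (g' s (η s ω) + h s (η s ω))) := by
        funext ω
        apply setIntegral_congr_fun measurableSet_Ioc
        intro s hs
        simp only [hG'_def, hH_def, hcl_eq _ ⟨hs.1.le, hs.2.trans huT⟩]
      rw [← hcongr]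
      exact key.aestronglyMeasurable
    · rw [hasFiniteIntegral_iff_norm]
      have step1 : ∀ ω, ENNReal.ofReal ‖∫ s in Ioc (0:ℝ) u, (g' s (η s ω) + h s (η s ω))‖ ≤
          ∫⁻ s in Ioc (0:ℝ) u, ENNReal.ofReal (|G' (s, η (cl s) ω) + H (s, η (cl s) ω)|) := by
        intro ω
        have e1 : ENNReal.ofReal ‖∫ s in Ioc (0:ℝ) u, (g' s (η s ω) + h s (η s ω))‖ ≤
            ENNReal.ofReal (∫ s in Ioc (0:ℝ) u, |g' s (η s ω) + h s (η s ω)|) := by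
          apply ENNReal.ofReal_le_ofReal
          simpa only [Real.norm_eq_abs] using
            norm_integral_le_integral_norm (fun s => g' s (η s ω) + h s (η s ω))
        rw [ofReal_integral_eq_lintegral_ofReal ((hFIntOn u hu0 huT ω).abs)
          (Eventually.of_forall fun s => abs_nonneg _)] at e1
        refine e1.trans (le_of_eq ?_)
        apply setLIntegral_congr_fun measurableSet_Ioc
        intro s hs
        simp only [hG'_def, hH_def, hcl_eq _ ⟨hs.1.le, hs.2.trans huT⟩]
      calc (∫⁻ ω, ENNReal.ofReal ‖∫ s in Ioc (0:ℝ) u, (g' s (η s ω) + h s (η s ω))‖ ∂P)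
          ≤ ∫⁻ ω, ∫⁻ s in Ioc (0:ℝ) u,
              ENNReal.ofReal (|G' (s, η (cl s) ω) + H (s, η (cl s) ω)|) ∂volume ∂P :=
            lintegral_mono step1
        _ = ∫⁻ s in Ioc (0:ℝ) u,
              ∫⁻ ω, ENNReal.ofReal (|G' (s, η (cl s) ω) + H (s, η (cl s) ω)|) ∂P ∂volume := by
            apply lintegral_lintegral_swap
            apply Measurable.aemeasurable
            apply ENNReal.measurable_ofReal.comp
            apply Measurable.abs
            have hm : Measurable fun p : Ω × ℝ => (p.2, η (cl p.2) p.1) :=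
              measurable_snd.prodMk (hη_jointly_meas.comp
                ((hcl_cont.measurable.comp measurable_snd).prodMk measurable_fst))
            exact ((hG'cont.add hHcont).measurable.comp hm)
        _ ≤ ∫⁻ _ in Ioc (0:ℝ) u, (ENNReal.ofReal C₂ + 1) ∂volume := by
            apply lintegral_mono_ae
            filter_upwards [ae_restrict_mem measurableSet_Ioc] with s hs
            have hs' : s ∈ Icc (0:ℝ) T := ⟨hs.1.le, hs.2.trans huT⟩
            have hb : ∀ ω, ENNReal.ofReal (|G' (s, η (cl s) ω) + H (s, η (cl s) ω)|) ≤
                ENNReal.ofReal (g' s (η s ω) ^ 2 + h s (η s ω) ^ 2) + 1 := by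
              intro ω
              simp only [hG'_def, hH_def, hcl_eq _ hs']
              calc ENNReal.ofReal (|g' s (η s ω) + h s (η s ω)|)
                  ≤ ENNReal.ofReal (g' s (η s ω) ^ 2 + h s (η s ω) ^ 2 + 1) :=
                    ENNReal.ofReal_le_ofReal (habs_sq _ _)
                _ = ENNReal.ofReal (g' s (η s ω) ^ 2 + h s (η s ω) ^ 2) + 1 := by
                    rw [ENNReal.ofReal_add (by positivity) zero_le_one, ENNReal.ofReal_one]
            calc (∫⁻ ω, ENNReal.ofReal (|G' (s, η (cl s) ω) + H (s, η (cl s) ω)|) ∂P)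
                ≤ ∫⁻ ω, (ENNReal.ofReal (g' s (η s ω) ^ 2 + h s (η s ω) ^ 2) + 1) ∂P :=
                  lintegral_mono hb
              _ = (∫⁻ ω, ENNReal.ofReal (g' s (η s ω) ^ 2 + h s (η s ω) ^ 2) ∂P) + 1 := by
                  rw [lintegral_add_right _ measurable_const, lintegral_const,
                    measure_univ, mul_one]
              _ ≤ ENNReal.ofReal C₂ + 1 := add_le_add (hC₂ s hs' s hs') le_rfl
        _ < ⊤ := by
            rw [setLIntegral_const, Real.volume_Ioc]
            exact ENNReal.mul_lt_top (by simp [ENNReal.ofReal_lt_top]) ENNReal.ofReal_lt_top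
  -- part 2 : integrability
  have part2 : ∀ t : ℝ, 0 ≤ t → Integrable (fun ω =>
      g (min t T) (η (min t T) ω) - g 0 (η 0 ω) -
        ∫ s in Ioc (0 : ℝ) (min t T), (g' s (η s ω) + h s (η s ω))) P := by
    intro t ht
    exact ((hg_int (min t T) ⟨le_min ht hT, min_le_right _ _⟩).sub
      (hg_int 0 ⟨le_rfl, hT⟩)).sub (hTI_int (min t T) (le_min ht hT) (min_le_right _ _))

  refine ⟨part1, part2, ?_⟩
  intro t₁ t₂ ht₁ ht₁₂
  set u₁ := min t₁ T with hu₁_def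
  set u₂ := min t₂ T with hu₂_def
  have hu₁0 : 0 ≤ u₁ := le_min ht₁ hT
  have hu₂0 : 0 ≤ u₂ := le_min (ht₁.trans ht₁₂) hT
  have hu₁T : u₁ ≤ T := min_le_right _ _
  have hu₂T : u₂ ≤ T := min_le_right _ _
  have hu₁₂ : u₁ ≤ u₂ := min_le_min ht₁₂ le_rfl
  set N : ℝ → Ω → ℝ := fun u ω => g u (η u ω) - g 0 (η 0 ω) -
      ∫ s in Ioc (0 : ℝ) u, (g' s (η s ω) + h s (η s ω)) with hN_def
  have hNmeas : Measurable[ℱ t₁] (N u₁) := part1 t₁ ht₁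
  have hNu₁_int : Integrable (N u₁) P := part2 t₁ ht₁
  have hNu₂_int : Integrable (N u₂) P := part2 t₂ (ht₁.trans ht₁₂)
  show P[N u₂|ℱ t₁] =ᵐ[P] N u₁
  by_cases hTt₁ : T ≤ t₁
  · have he : u₂ = u₁ := by
      rw [hu₁_def, hu₂_def, min_eq_right hTt₁, min_eq_right (hTt₁.trans ht₁₂)]
    rw [he, condExp_of_stronglyMeasurable (ℱ.le t₁) hNmeas.stronglyMeasurable hNu₁_int]
  -- main case : t₁ < T, u₁ = t₁
  have hu₁t : u₁ = t₁ := min_eq_left (le_of_not_ge hTt₁)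
  rw [← hu₁t] at hNmeas ⊢
  -- it suffices to show that the conditional expectation of the increment vanishes
  suffices hker : P[N u₂ - N u₁|ℱ u₁] =ᵐ[P] 0 by
    have hdecomp : N u₂ = N u₁ + (N u₂ - N u₁) := by ring
    calc P[N u₂|ℱ u₁] = P[N u₁ + (N u₂ - N u₁)|ℱ u₁] := by rw [← hdecomp]
      _ =ᵐ[P] P[N u₁|ℱ u₁] + P[N u₂ - N u₁|ℱ u₁] :=
          condExp_add hNu₁_int (hNu₂_int.sub hNu₁_int) _
      _ =ᵐ[P] N u₁ + 0 := by
          refine EventuallyEq.add ?_ hker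
          rw [condExp_of_stronglyMeasurable (ℱ.le u₁) hNmeas.stronglyMeasurable hNu₁_int]
      _ = N u₁ := by rw [add_zero]
  by_cases hlt : u₁ < u₂
  swap
  · have he : u₂ = u₁ := le_antisymm (not_lt.mp hlt) hu₁₂
    have : N u₂ - N u₁ = 0 := by rw [he]; ring
    rw [this, condExp_zero]
  -- now 0 ≤ u₁ < u₂ ≤ T; set up the dyadic-style partitions
  set δ : ℕ → ℝ := fun n => (u₂ - u₁) / (n + 1) with hδ_def
  have hδpos : ∀ n, 0 < δ n := fun n => div_pos (sub_pos.2 hlt) (by positivity)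
  have hδ0 : Tendsto δ atTop (𝓝 0) := by
    rw [hδ_def]
    apply Tendsto.div_atTop (tendsto_const_nhds (x := u₂ - u₁))
    exact tendsto_atTop_add_const_right _ 1 tendsto_natCast_atTop_atTop
  set pt : ℕ → ℕ → ℝ := fun n k => u₁ + k * δ n with hpt_def
  have hpt0 : ∀ n, pt n 0 = u₁ := by intro n; simp [hpt_def]
  have hptlast : ∀ n, pt n (n + 1) = u₂ := by
    intro n
    rw [hpt_def, hδ_def]
    push_cast
    field_simp
    ring
  have hptmono : ∀ n, Monotone (pt n) := by
    intro n k l hkl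
    simp only [hpt_def]
    have hc : (k : ℝ) ≤ l := by exact_mod_cast hkl
    nlinarith [hδpos n]
  have hpt_mem : ∀ n, ∀ k ≤ n + 1, pt n k ∈ Icc u₁ u₂ := fun n k hk =>
    ⟨by rw [← hpt0 n]; exact hptmono n (Nat.zero_le k),
     by rw [← hptlast n]; exact hptmono n hk⟩
  have hsubIcc : Icc u₁ u₂ ⊆ Icc (0:ℝ) T := fun x hx => ⟨hu₁0.trans hx.1, hx.2.trans hu₂T⟩
  set cidx : ℕ → ℝ → ℤ := fun n r => ⌈(r - u₁) / δ n⌉ with hcidx_def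
  set ρ : ℕ → ℝ → ℝ := fun n r => u₁ + (cidx n r) * δ n with hρ_def
  set κ : ℕ → ℝ → ℝ := fun n r => u₁ + ((cidx n r : ℝ) - 1) * δ n with hκ_def
  have hcidx_meas : ∀ n, Measurable (cidx n) := fun n =>
    Int.measurable_ceil.comp ((measurable_id.sub_const _).div_const _)
  have hρ_meas : ∀ n, Measurable (ρ n) := fun n =>
    (measurable_from_top (f := fun k : ℤ => u₁ + (k : ℝ) * δ n)).comp (hcidx_meas n)
  have hκ_meas : ∀ n, Measurable (κ n) := fun n =>
    (measurable_from_top (f := fun k : ℤ => u₁ + ((k : ℝ) - 1) * δ n)).comp (hcidx_meas n)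
  have hcidx_bounds : ∀ n, ∀ v ∈ Ioc u₁ u₂, 1 ≤ cidx n v ∧ cidx n v ≤ n + 1 := by
    intro n v hv
    constructor
    · have := Int.ceil_pos.mpr (div_pos (sub_pos.2 hv.1) (hδpos n))
      simp only [hcidx_def]
      omega
    · simp only [hcidx_def]
      apply Int.ceil_le.mpr
      push_cast
      rw [div_le_iff₀ (hδpos n)]
      have h1 : v - u₁ ≤ u₂ - u₁ := by linarith [hv.2]
      have h2 : u₂ - u₁ = ((n : ℝ) + 1) * δ n := by
        rw [hδ_def]; field_simp
      linarith
  have hρ_ge : ∀ n, ∀ v ∈ Ioc u₁ u₂, v ≤ ρ n v := by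
    intro n v hv
    simp only [hρ_def, hcidx_def]
    have h1 : (v - u₁) / δ n ≤ (⌈(v - u₁) / δ n⌉ : ℝ) := Int.le_ceil _
    have h2 : (v - u₁) / δ n * δ n = v - u₁ := div_mul_cancel₀ _ (hδpos n).ne'
    nlinarith [(mul_le_mul_of_nonneg_right h1 (hδpos n).le)]
  have hρ_le : ∀ n, ∀ v ∈ Ioc u₁ u₂, ρ n v ≤ v + δ n := by
    intro n v hv
    simp only [hρ_def, hcidx_def]
    have h1 : (⌈(v - u₁) / δ n⌉ : ℝ) < (v - u₁) / δ n + 1 := Int.ceil_lt_add_one _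
    have h2 : (v - u₁) / δ n * δ n = v - u₁ := div_mul_cancel₀ _ (hδpos n).ne'
    nlinarith [(mul_le_mul_of_nonneg_right h1.le (hδpos n).le)]
  have hρ_le_u₂ : ∀ n, ∀ v ∈ Ioc u₁ u₂, ρ n v ≤ u₂ := by
    intro n v hv
    simp only [hρ_def]
    have h1 : (cidx n v : ℝ) ≤ (n : ℝ) + 1 := by exact_mod_cast (hcidx_bounds n v hv).2
    have h2 : u₂ - u₁ = ((n : ℝ) + 1) * δ n := by rw [hδ_def]; field_simp
    nlinarith [hδpos n]
  have hρ_mem : ∀ n, ∀ v ∈ Ioc u₁ u₂, ρ n v ∈ Icc (0:ℝ) T := fun n v hv =>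
    hsubIcc ⟨hv.1.le.trans (hρ_ge n v hv), hρ_le_u₂ n v hv⟩
  have hκ_le : ∀ n, ∀ v ∈ Ioc u₁ u₂, κ n v ≤ v := by
    intro n v hv
    simp only [hκ_def, hcidx_def]
    have h1 : (⌈(v - u₁) / δ n⌉ : ℝ) - 1 < (v - u₁) / δ n := by
      have := Int.ceil_lt_add_one ((v - u₁) / δ n); linarith
    have h2 : (v - u₁) / δ n * δ n = v - u₁ := div_mul_cancel₀ _ (hδpos n).ne'
    nlinarith [(mul_le_mul_of_nonneg_right h1.le (hδpos n).le)]
  have hκ_ge : ∀ n, ∀ v ∈ Ioc u₁ u₂, v - δ n ≤ κ n v := by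
    intro n v hv
    have := hρ_ge n v hv
    simp only [hρ_def] at this
    simp only [hκ_def]
    nlinarith [this]
  have hκ_ge_u₁ : ∀ n, ∀ v ∈ Ioc u₁ u₂, u₁ ≤ κ n v := by
    intro n v hv
    simp only [hκ_def]
    have h1 : (1 : ℝ) ≤ (cidx n v : ℝ) := by exact_mod_cast (hcidx_bounds n v hv).1
    nlinarith [hδpos n]
  have hκ_mem : ∀ n, ∀ v ∈ Ioc u₁ u₂, κ n v ∈ Icc (0:ℝ) T := fun n v hv =>
    hsubIcc ⟨hκ_ge_u₁ n v hv, (hκ_le n v hv).trans hv.2⟩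
  have hρ_tendsto : ∀ v ∈ Ioc u₁ u₂, Tendsto (fun n => ρ n v) atTop (𝓝[Ici v] v) := by
    intro v hv
    apply tendsto_nhdsWithin_of_tendsto_nhds_of_eventually_within
    · apply tendsto_of_tendsto_of_tendsto_of_le_of_le (g := fun _ => v)
        (h := fun n => v + δ n) tendsto_const_nhds
      · simpa using tendsto_const_nhds.add hδ0
      · exact fun n => hρ_ge n v hv
      · exact fun n => hρ_le n v hv
    · exact Eventually.of_forall fun n => hρ_ge n v hv
  have hκ_tendsto : ∀ v ∈ Ioc u₁ u₂, Tendsto (fun n => κ n v) atTop (𝓝 v) := by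
    intro v hv
    apply tendsto_of_tendsto_of_tendsto_of_le_of_le (g := fun n => v - δ n)
      (h := fun _ => v)
    · simpa using tendsto_const_nhds.sub hδ0
    · exact tendsto_const_nhds
    · exact fun n => hκ_ge n v hv
    · exact fun n => hκ_le n v hv
  have hcidx_on : ∀ n, ∀ k : ℕ, ∀ v ∈ Ioc (pt n k) (pt n (k+1)), cidx n v = (k : ℤ) + 1 := by
    intro n k v hv
    simp only [hcidx_def]
    rw [Int.ceil_eq_iff]
    obtain ⟨hv1, hv2⟩ := hv
    simp only [hpt_def] at hv1 hv2
    push_cast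
    constructor
    · rw [lt_div_iff₀ (hδpos n)]
      push_cast at hv1
      linarith
    · rw [div_le_iff₀ (hδpos n)]
      push_cast at hv2
      linarith
  -- FTC for g in the time variable
  have hFTC : ∀ (a b : ℝ), 0 ≤ a → a ≤ b → b ≤ T → ∀ ζ : S,
      g b ζ - g a ζ = ∫ v in Ioc a b, g' v ζ := by
    intro a b ha hab hbT ζ
    have hderiv : ∀ v ∈ uIcc a b, HasDerivAt (fun t' => g t' ζ) (g' v ζ) v := by
      intro v hv
      rw [uIcc_of_le hab] at hv
      exact hII ζ v ⟨ha.trans hv.1, hv.2.trans hbT⟩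
    have hcont : ContinuousOn (fun v => g' v ζ) (uIcc a b) := by
      have hc : Continuous (fun v => G' (v, ζ)) :=
        hG'cont.comp (continuous_id.prodMk continuous_const)
      apply hc.continuousOn.congr
      intro v hv
      rw [uIcc_of_le hab] at hv
      simp only [hG'_def, hcl_eq v ⟨ha.trans hv.1, hv.2.trans hbT⟩]
    have hkey := intervalIntegral.integral_eq_sub_of_hasDerivAt hderiv
      hcont.intervalIntegrable
    rw [intervalIntegral.integral_of_le hab] at hkey
    rw [← hkey]
  -- integrability of the test integrand
  have hh_IntOn : ∀ c ∈ Icc (0:ℝ) T, ∀ (a b : ℝ), 0 ≤ a → b ≤ T → ∀ ω,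
      IntegrableOn (fun r => h c (η r ω)) (Ioc a b) volume := by
    intro c hc a b ha hb ω
    have hi := hINT H hHcont (fun _ => c) id measurable_const measurable_id a b
      (fun r hr => ⟨hc, ⟨ha.trans hr.1.le, hr.2.trans hb⟩⟩) ω
    refine hi.congr_fun ?_ measurableSet_Ioc
    intro r hr
    simp only [hH_def, id_eq, hcl_eq _ hc]
  -- the martingale increments over the partition
  set term : ℕ → ℕ → Ω → ℝ := fun n k ω =>
    g (pt n k) (η (pt n (k+1)) ω) - g (pt n k) (η (pt n k) ω) -
      ∫ r in Ioc (pt n k) (pt n (k+1)), h (pt n k) (η r ω) with hterm_def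
  have hpt_memT : ∀ n, ∀ k ≤ n + 1, pt n k ∈ Icc (0:ℝ) T := fun n k hk =>
    hsubIcc (hpt_mem n k hk)
  have hterm_comp : ∀ n, ∀ k ≤ n, term n k =
      comp (fun ζ => g (pt n k) ζ) (fun ζ => h (pt n k) ζ) η (pt n (k+1)) -
      comp (fun ζ => g (pt n k) ζ) (fun ζ => h (pt n k) ζ) η (pt n k) := by
    intro n k hk
    funext ω
    have hmemk : pt n k ∈ Icc (0:ℝ) T := hpt_memT n k (by omega)
    have hmemk1 : pt n (k+1) ∈ Icc (0:ℝ) T := hpt_memT n (k+1) (by omega)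
    have h0k : 0 ≤ pt n k := hmemk.1
    have hkk1 : pt n k ≤ pt n (k+1) := hptmono n (Nat.le_succ k)
    have hdisj : Disjoint (Ioc (0:ℝ) (pt n k)) (Ioc (pt n k) (pt n (k+1))) := by
      rw [Set.Ioc_disjoint_Ioc]
      exact (min_le_left _ _).trans (le_max_right _ _)
    have hsplit : ∫ r in Ioc (0:ℝ) (pt n (k+1)), h (pt n k) (η r ω) =
        (∫ r in Ioc (0:ℝ) (pt n k), h (pt n k) (η r ω)) +
        ∫ r in Ioc (pt n k) (pt n (k+1)), h (pt n k) (η r ω) := by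
      rw [← setIntegral_union hdisj measurableSet_Ioc
        (hh_IntOn _ hmemk 0 (pt n k) le_rfl hmemk.2 ω)
        (hh_IntOn _ hmemk (pt n k) (pt n (k+1)) h0k hmemk1.2 ω),
        Ioc_union_Ioc_eq_Ioc h0k hkk1]
    simp only [hterm_def, Pi.sub_apply, comp]
    rw [hsplit]
    ring
  have hterm_int : ∀ n, ∀ k ≤ n, Integrable (term n k) P := by
    intro n k hk
    have hmemk : pt n k ∈ Icc (0:ℝ) T := hpt_memT n k (by omega)
    obtain ⟨hφA, hφGen⟩ := hIII (pt n k) hmemk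
    have hm := hmart _ hφA
    rw [hφGen] at hm
    rw [hterm_comp n k hk]
    exact (hm.2.1 _ (hmemk.1.trans (hptmono n (Nat.le_succ k)))).sub (hm.2.1 _ hmemk.1)
  have hterm_cond : ∀ n, ∀ k ≤ n, P[term n k|ℱ u₁] =ᵐ[P] 0 := by
    intro n k hk
    have hmemk : pt n k ∈ Icc (0:ℝ) T := hpt_memT n k (by omega)
    obtain ⟨hφA, hφGen⟩ := hIII (pt n k) hmemk
    have hm := hmart _ hφA
    rw [hφGen] at hm
    obtain ⟨hm1, hm2, hm3⟩ := hm
    have h0k : 0 ≤ pt n k := hmemk.1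
    have hkk1 : pt n k ≤ pt n (k+1) := hptmono n (Nat.le_succ k)
    have hd : P[term n k|ℱ (pt n k)] =ᵐ[P] 0 := by
      rw [hterm_comp n k hk]
      refine (condExp_sub (hm2 _ (h0k.trans hkk1)) (hm2 _ h0k) _).trans ?_
      have hfix : P[comp (fun ζ => g (pt n k) ζ) (fun ζ => h (pt n k) ζ) η (pt n k)|
          ℱ (pt n k)] =ᵐ[P] comp (fun ζ => g (pt n k) ζ) (fun ζ => h (pt n k) ζ) η (pt n k) := by
        rw [condExp_of_stronglyMeasurable (ℱ.le _) ((hm1 _ h0k).stronglyMeasurable) (hm2 _ h0k)]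
      have hstep := hm3 (pt n k) (pt n (k+1)) h0k hkk1
      filter_upwards [hstep, hfix] with ω h1 h2
      simp only [Pi.sub_apply, Pi.zero_apply, h1, h2, sub_self]
    have hu₁k : u₁ ≤ pt n k := (hpt_mem n k (by omega)).1
    have htower := condExp_condExp_of_le (ℱ.mono hu₁k) (ℱ.le (pt n k))
      (f := term n k) (μ := P)
    calc P[term n k|ℱ u₁] =ᵐ[P] P[P[term n k|ℱ (pt n k)]|ℱ u₁] := htower.symm
      _ =ᵐ[P] P[(0 : Ω → ℝ)|ℱ u₁] := condExp_congr_ae hd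
      _ = 0 := condExp_zero
  have hsum_int : ∀ n, Integrable (∑ k ∈ Finset.range (n+1), term n k) P := by
    intro n
    exact integrable_finset_sum' _
      (fun k hk => hterm_int n k (Nat.lt_succ_iff.mp (Finset.mem_range.mp hk)))
  have hsum_cond : ∀ n, P[∑ k ∈ Finset.range (n+1), term n k|ℱ u₁] =ᵐ[P] 0 := by
    intro n
    have h1 := condExp_finset_sum (μ := P) (m := ℱ u₁) (s := Finset.range (n+1))
      (f := term n) (fun k hk => hterm_int n k (Nat.lt_succ_iff.mp (Finset.mem_range.mp hk)))
    refine h1.trans ?_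
    have h2 : ∀ᵐ ω ∂P, ∀ k : ℕ, k ≤ n → (P[term n k|ℱ u₁]) ω = 0 := by
      rw [ae_all_iff]
      intro k
      by_cases hk : k ≤ n
      · filter_upwards [hterm_cond n k hk] with ω hω _ using hω
      · filter_upwards with ω hk'
        exact absurd hk' hk
    filter_upwards [h2] with ω hω
    rw [Finset.sum_apply]
    simp only [Pi.zero_apply]
    exact Finset.sum_eq_zero fun k hk => hω k (Nat.lt_succ_iff.mp (Finset.mem_range.mp hk))
  -- integrable families of path integrands
  have hI1 : ∀ n ω, IntegrableOn (fun v => G' (v, η (ρ n v) ω)) (Ioc u₁ u₂) volume :=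
    fun n ω => hINT G' hG'cont id (ρ n) measurable_id (hρ_meas n) u₁ u₂
      (fun v hv => ⟨hsubIcc ⟨hv.1.le, hv.2⟩, hρ_mem n v hv⟩) ω
  have hI2 : ∀ ω, IntegrableOn (fun v => G' (v, η v ω)) (Ioc u₁ u₂) volume :=
    fun ω => hINT G' hG'cont id id measurable_id measurable_id u₁ u₂
      (fun v hv => ⟨hsubIcc ⟨hv.1.le, hv.2⟩, hsubIcc ⟨hv.1.le, hv.2⟩⟩) ω
  have hI3 : ∀ n ω, IntegrableOn (fun v => H (κ n v, η v ω)) (Ioc u₁ u₂) volume :=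
    fun n ω => hINT H hHcont (κ n) id (hκ_meas n) measurable_id u₁ u₂
      (fun v hv => ⟨hκ_mem n v hv, hsubIcc ⟨hv.1.le, hv.2⟩⟩) ω
  have hI4 : ∀ ω, IntegrableOn (fun v => H (v, η v ω)) (Ioc u₁ u₂) volume :=
    fun ω => hINT H hHcont id id measurable_id measurable_id u₁ u₂
      (fun v hv => ⟨hsubIcc ⟨hv.1.le, hv.2⟩, hsubIcc ⟨hv.1.le, hv.2⟩⟩) ω
  -- the remainder process
  set R : ℕ → Ω → ℝ := fun n ω =>
    (∫ v in Ioc u₁ u₂, (G' (v, η (ρ n v) ω) - G' (v, η v ω))) +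
    (∫ v in Ioc u₁ u₂, (H (κ n v, η v ω) - H (v, η v ω))) with hR_def
  -- pointwise identity
  have hident : ∀ n, N u₂ - N u₁ = (∑ k ∈ Finset.range (n+1), term n k) + R n := by
    intro n
    funext ω
    have hdisj0 : Disjoint (Ioc (0:ℝ) u₁) (Ioc u₁ u₂) := by
      rw [Set.Ioc_disjoint_Ioc]
      exact (min_le_left _ _).trans (le_max_right _ _)
    have hFsplit : ∫ v in Ioc (0:ℝ) u₂, (g' v (η v ω) + h v (η v ω)) =
        (∫ v in Ioc (0:ℝ) u₁, (g' v (η v ω) + h v (η v ω))) +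
        ∫ v in Ioc u₁ u₂, (g' v (η v ω) + h v (η v ω)) := by
      rw [← setIntegral_union hdisj0 measurableSet_Ioc (hFIntOn u₁ hu₁0 hu₁T ω)
        ((hFIntOn u₂ hu₂0 hu₂T ω).mono_set (Ioc_subset_Ioc hu₁0 le_rfl)),
        Ioc_union_Ioc_eq_Ioc hu₁0 hu₁₂]
    have hpiece : ∀ k ≤ n, term n k ω =
        (g (pt n (k+1)) (η (pt n (k+1)) ω) - g (pt n k) (η (pt n k) ω))
        - (∫ v in Ioc (pt n k) (pt n (k+1)), G' (v, η (ρ n v) ω))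
        - ∫ v in Ioc (pt n k) (pt n (k+1)), H (κ n v, η v ω) := by
      intro k hk
      have hmemk : pt n k ∈ Icc (0:ℝ) T := hpt_memT n k (by omega)
      have hmemk1 : pt n (k+1) ∈ Icc (0:ℝ) T := hpt_memT n (k+1) (by omega)
      have hkk1 : pt n k ≤ pt n (k+1) := hptmono n (Nat.le_succ k)
      have hsubpiece : Ioc (pt n k) (pt n (k+1)) ⊆ Ioc u₁ u₂ :=
        Ioc_subset_Ioc (hpt_mem n k (by omega)).1 (hpt_mem n (k+1) (by omega)).2
      have hftc : g (pt n (k+1)) (η (pt n (k+1)) ω) - g (pt n k) (η (pt n (k+1)) ω) =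
          ∫ v in Ioc (pt n k) (pt n (k+1)), g' v (η (pt n (k+1)) ω) :=
        hFTC _ _ hmemk.1 hkk1 hmemk1.2 _
      have hcongr1 : ∫ v in Ioc (pt n k) (pt n (k+1)), g' v (η (pt n (k+1)) ω) =
          ∫ v in Ioc (pt n k) (pt n (k+1)), G' (v, η (ρ n v) ω) := by
        apply setIntegral_congr_fun measurableSet_Ioc
        intro v hv
        dsimp only
        have hvm : v ∈ Ioc u₁ u₂ := hsubpiece hv
        have hρv : ρ n v = pt n (k+1) := by
          simp only [hρ_def, hcidx_on n k v hv, hpt_def]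
          push_cast
          ring
        rw [hρv]
        simp only [hG'_def, hcl_eq v (hsubIcc ⟨hvm.1.le, hvm.2⟩)]
      have hcongr2 : ∫ r in Ioc (pt n k) (pt n (k+1)), h (pt n k) (η r ω) =
          ∫ v in Ioc (pt n k) (pt n (k+1)), H (κ n v, η v ω) := by
        apply setIntegral_congr_fun measurableSet_Ioc
        intro v hv
        dsimp only
        have hκv : κ n v = pt n k := by
          simp only [hκ_def, hcidx_on n k v hv, hpt_def]
          push_cast
          ring
        rw [hκv]
        simp only [hH_def, hcl_eq _ hmemk]
      simp only [hterm_def]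
      rw [hcongr2, ← hcongr1, ← hftc]
      ring
    have hsum_eval : (∑ k ∈ Finset.range (n+1), term n k) ω =
        (g u₂ (η u₂ ω) - g u₁ (η u₁ ω))
        - (∫ v in Ioc u₁ u₂, G' (v, η (ρ n v) ω))
        - ∫ v in Ioc u₁ u₂, H (κ n v, η v ω) := by
      rw [Finset.sum_apply]
      rw [Finset.sum_congr rfl
        (fun k hk => hpiece k (Nat.lt_succ_iff.mp (Finset.mem_range.mp hk)))]
      rw [Finset.sum_sub_distrib, Finset.sum_sub_distrib]
      rw [Finset.sum_range_sub (f := fun k => g (pt n k) (η (pt n k) ω))]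
      have hs1 := sum_setIntegral_Ioc (fun v => G' (v, η (ρ n v) ω)) (pt n)
        (hptmono n) (n+1) (by rw [hpt0, hptlast]; exact hI1 n ω)
      have hs2 := sum_setIntegral_Ioc (fun v => H (κ n v, η v ω)) (pt n)
        (hptmono n) (n+1) (by rw [hpt0, hptlast]; exact hI3 n ω)
      rw [hs1, hs2, hpt0, hptlast]
    have hN2 : N u₂ ω - N u₁ ω = (g u₂ (η u₂ ω) - g u₁ (η u₁ ω)) -
        ∫ v in Ioc u₁ u₂, (g' v (η v ω) + h v (η v ω)) := by
      simp only [hN_def]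
      rw [hFsplit]
      ring
    have hsumint : ∫ v in Ioc u₁ u₂, (g' v (η v ω) + h v (η v ω)) =
        (∫ v in Ioc u₁ u₂, G' (v, η v ω)) + ∫ v in Ioc u₁ u₂, H (v, η v ω) := by
      have e1 : ∫ v in Ioc u₁ u₂, (g' v (η v ω) + h v (η v ω)) =
          ∫ v in Ioc u₁ u₂, (G' (v, η v ω) + H (v, η v ω)) := by
        apply setIntegral_congr_fun measurableSet_Ioc
        intro v hv
        simp only [hG'_def, hH_def, hcl_eq v (hsubIcc ⟨hv.1.le, hv.2⟩)]
      rw [e1, integral_add (hI2 ω) (hI4 ω)]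
    have hRsub1 : ∫ v in Ioc u₁ u₂, (G' (v, η (ρ n v) ω) - G' (v, η v ω)) =
        (∫ v in Ioc u₁ u₂, G' (v, η (ρ n v) ω)) - ∫ v in Ioc u₁ u₂, G' (v, η v ω) :=
      integral_sub (hI1 n ω) (hI2 ω)
    have hRsub2 : ∫ v in Ioc u₁ u₂, (H (κ n v, η v ω) - H (v, η v ω)) =
        (∫ v in Ioc u₁ u₂, H (κ n v, η v ω)) - ∫ v in Ioc u₁ u₂, H (v, η v ω) :=
      integral_sub (hI3 n ω) (hI4 ω)
    simp only [Pi.sub_apply, Pi.add_apply, hR_def]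
    linarith [hN2, hsum_eval, hsumint, hRsub1, hRsub2]
  have hR_int : ∀ n, Integrable (R n) P := by
    intro n
    have : R n = (N u₂ - N u₁) - ∑ k ∈ Finset.range (n+1), term n k := by
      rw [hident n]; ring
    rw [this]
    exact ((hNu₂_int.sub hNu₁_int).sub (hsum_int n))
  -- continuous slices
  have hslice_g' : ∀ c ∈ Icc (0:ℝ) T, Continuous (fun ζ => g' c ζ) := by
    intro c hc
    have hcomp := hG'cont.comp (Continuous.prodMk_right c)
    simp only [hG'_def, Function.comp_def] at hcomp
    rwa [hcl_eq c hc] at hcomp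
  have hslice_h : ∀ c ∈ Icc (0:ℝ) T, Continuous (fun ζ => h c ζ) := by
    intro c hc
    have hcomp := hHcont.comp (Continuous.prodMk_right c)
    simp only [hH_def, Function.comp_def] at hcomp
    rwa [hcl_eq c hc] at hcomp
  -- the error integrand
  set φf : ℕ → ℝ → Ω → ℝ := fun n v ω =>
    |G' (v, η (ρ n v) ω) - G' (v, η v ω)| + |H (κ n v, η v ω) - H (v, η v ω)| with hφf_def
  have hφf_nonneg : ∀ n v ω, 0 ≤ φf n v ω := fun n v ω =>
    add_nonneg (abs_nonneg _) (abs_nonneg _)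
  have hφf_IntOn : ∀ n ω, IntegrableOn (fun v => φf n v ω) (Ioc u₁ u₂) volume := fun n ω =>
    (((hI1 n ω).sub (hI2 ω)).abs).add (((hI3 n ω).sub (hI4 ω)).abs)
  have hRbound : ∀ n ω, |R n ω| ≤ ∫ v in Ioc u₁ u₂, φf n v ω := by
    intro n ω
    simp only [hR_def]
    calc |(∫ v in Ioc u₁ u₂, (G' (v, η (ρ n v) ω) - G' (v, η v ω))) +
          ∫ v in Ioc u₁ u₂, (H (κ n v, η v ω) - H (v, η v ω))|
        ≤ |∫ v in Ioc u₁ u₂, (G' (v, η (ρ n v) ω) - G' (v, η v ω))| +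
          |∫ v in Ioc u₁ u₂, (H (κ n v, η v ω) - H (v, η v ω))| := abs_add_le _ _
      _ ≤ (∫ v in Ioc u₁ u₂, |G' (v, η (ρ n v) ω) - G' (v, η v ω)|) +
          ∫ v in Ioc u₁ u₂, |H (κ n v, η v ω) - H (v, η v ω)| :=
          by
          have hn1 := norm_integral_le_integral_norm (μ := volume.restrict (Ioc u₁ u₂))
            (fun v => G' (v, η (ρ n v) ω) - G' (v, η v ω))
          have hn2 := norm_integral_le_integral_norm (μ := volume.restrict (Ioc u₁ u₂))
            (fun v => H (κ n v, η v ω) - H (v, η v ω))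
          simp only [Real.norm_eq_abs] at hn1 hn2
          exact add_le_add hn1 hn2
      _ = ∫ v in Ioc u₁ u₂, φf n v ω := by
          have hA : IntegrableOn (fun v => |G' (v, η (ρ n v) ω) - G' (v, η v ω)|)
              (Ioc u₁ u₂) volume := ((hI1 n ω).sub (hI2 ω)).abs
          have hB : IntegrableOn (fun v => |H (κ n v, η v ω) - H (v, η v ω)|)
              (Ioc u₁ u₂) volume := ((hI3 n ω).sub (hI4 ω)).abs
          rw [← integral_add hA hB]
  -- joint measurability of the error integrand
  have hjm : ∀ n, Measurable (fun p : Ω × ℝ => φf n p.2 p.1) := by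
    intro n
    have e1 : Measurable fun p : Ω × ℝ => η (ρ n p.2) p.1 :=
      hη_jointly_meas.comp (((hρ_meas n).comp measurable_snd).prodMk measurable_fst)
    have e2 : Measurable fun p : Ω × ℝ => η p.2 p.1 :=
      hη_jointly_meas.comp (measurable_snd.prodMk measurable_fst)
    simp only [hφf_def]
    apply Measurable.add
    · exact continuous_abs.measurable.comp
        ((hG'cont.measurable.comp (measurable_snd.prodMk e1)).sub
          (hG'cont.measurable.comp (measurable_snd.prodMk e2)))
    · exact continuous_abs.measurable.comp
        ((hHcont.measurable.comp (((hκ_meas n).comp measurable_snd).prodMk e2)).sub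
          (hHcont.measurable.comp (measurable_snd.prodMk e2)))
  -- the uniform second-moment bound
  have hSQB : ∀ n, ∀ v ∈ Ioc u₁ u₂,
      (∫⁻ ω, ENNReal.ofReal ((φf n v ω) ^ 2) ∂P) ≤ 12 * ENNReal.ofReal C₂ := by
    intro n v hv
    have hvT : v ∈ Icc (0:ℝ) T := hsubIcc ⟨hv.1.le, hv.2⟩
    have hρT := hρ_mem n v hv
    have hκT := hκ_mem n v hv
    have hpt2 : ∀ ω, (φf n v ω) ^ 2 ≤
        4 * ((g' v (η (ρ n v) ω) ^ 2 + h v (η (ρ n v) ω) ^ 2) +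
          (g' v (η v ω) ^ 2 + h v (η v ω) ^ 2) +
          (g' (κ n v) (η v ω) ^ 2 + h (κ n v) (η v ω) ^ 2)) := by
      intro ω
      simp only [hφf_def, hG'_def, hH_def, hcl_eq v hvT, hcl_eq _ hκT]
      set A := g' v (η (ρ n v) ω)
      set B := g' v (η v ω)
      set C := h (κ n v) (η v ω)
      set D := h v (η v ω)
      have e1 : (|A - B| + |C - D|) ^ 2 ≤ 2 * (A - B) ^ 2 + 2 * (C - D) ^ 2 := by
        nlinarith [sq_nonneg (|A - B| - |C - D|), sq_abs (A - B), sq_abs (C - D),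
          abs_nonneg (A - B), abs_nonneg (C - D)]
      nlinarith [sq_nonneg (A + B), sq_nonneg (C + D), sq_nonneg (h v (η (ρ n v) ω)),
        sq_nonneg (g' (κ n v) (η v ω)), sq_nonneg (A - B), sq_nonneg (C - D)]
    have hm1 : Measurable fun ω =>
        ENNReal.ofReal (g' v (η (ρ n v) ω) ^ 2 + h v (η (ρ n v) ω) ^ 2) := by
      apply ENNReal.measurable_ofReal.comp
      exact ((((hslice_g' v hvT).measurable.comp (hη_meas _ hρT.1)).pow_const 2).add
        (((hslice_h v hvT).measurable.comp (hη_meas _ hρT.1)).pow_const 2))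
    have hm2 : Measurable fun ω =>
        ENNReal.ofReal (g' v (η v ω) ^ 2 + h v (η v ω) ^ 2) := by
      apply ENNReal.measurable_ofReal.comp
      exact ((((hslice_g' v hvT).measurable.comp (hη_meas _ hvT.1)).pow_const 2).add
        (((hslice_h v hvT).measurable.comp (hη_meas _ hvT.1)).pow_const 2))
    have hm3 : Measurable fun ω =>
        ENNReal.ofReal (g' (κ n v) (η v ω) ^ 2 + h (κ n v) (η v ω) ^ 2) := by
      apply ENNReal.measurable_ofReal.comp
      exact ((((hslice_g' _ hκT).measurable.comp (hη_meas _ hvT.1)).pow_const 2).add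
        (((hslice_h _ hκT).measurable.comp (hη_meas _ hvT.1)).pow_const 2))
    calc (∫⁻ ω, ENNReal.ofReal ((φf n v ω) ^ 2) ∂P)
        ≤ ∫⁻ ω, (4 * (ENNReal.ofReal (g' v (η (ρ n v) ω) ^ 2 + h v (η (ρ n v) ω) ^ 2) +
            ENNReal.ofReal (g' v (η v ω) ^ 2 + h v (η v ω) ^ 2) +
            ENNReal.ofReal (g' (κ n v) (η v ω) ^ 2 + h (κ n v) (η v ω) ^ 2))) ∂P := by
          apply lintegral_mono
          intro ω
          refine le_trans (ENNReal.ofReal_le_ofReal (hpt2 ω)) ?_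
          rw [ENNReal.ofReal_mul (by norm_num : (0:ℝ) ≤ 4)]
          rw [ENNReal.ofReal_add (by positivity) (by positivity)]
          rw [ENNReal.ofReal_add (by positivity) (by positivity)]
          simp [ENNReal.ofReal_ofNat]
      _ = 4 * ((∫⁻ ω, ENNReal.ofReal (g' v (η (ρ n v) ω) ^ 2 + h v (η (ρ n v) ω) ^ 2) ∂P) +
            (∫⁻ ω, ENNReal.ofReal (g' v (η v ω) ^ 2 + h v (η v ω) ^ 2) ∂P) +
            ∫⁻ ω, ENNReal.ofReal (g' (κ n v) (η v ω) ^ 2 + h (κ n v) (η v ω) ^ 2) ∂P) := by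
          rw [lintegral_const_mul' 4 _ (by norm_num)]
          congr 1
          rw [lintegral_add_left (f := fun ω => ENNReal.ofReal (g' v (η (ρ n v) ω) ^ 2 + h v (η (ρ n v) ω) ^ 2) +
              ENNReal.ofReal (g' v (η v ω) ^ 2 + h v (η v ω) ^ 2)) (hm1.add hm2), lintegral_add_left hm1]
      _ ≤ 4 * (ENNReal.ofReal C₂ + ENNReal.ofReal C₂ + ENNReal.ofReal C₂) := by
          gcongr
          · exact hC₂ v hvT (ρ n v) hρT
          · exact hC₂ v hvT v hvT
          · exact hC₂ (κ n v) hκT v hvT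
      _ = 12 * ENNReal.ofReal C₂ := by ring
  -- per-time Vitali convergence
  have hψ_tendsto : ∀ v ∈ Ioc u₁ u₂,
      Tendsto (fun n => ∫⁻ ω, ENNReal.ofReal (φf n v ω) ∂P) atTop (𝓝 0) := by
    intro v hv
    have hvT : v ∈ Icc (0:ℝ) T := hsubIcc ⟨hv.1.le, hv.2⟩
    have hmeasn : ∀ n, AEMeasurable (fun ω => φf n v ω) P := by
      intro n
      have := (hjm n).comp (measurable_id.prodMk (measurable_const (a := v)))
      exact this.aemeasurable
    have hlim : ∀ᵐ ω ∂P, Tendsto (fun n => φf n v ω) atTop (𝓝 0) := by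
      filter_upwards with ω
      have t1 : Tendsto (fun n => η (ρ n v) ω) atTop (𝓝 (η v ω)) :=
        (hrc ω v hvT.1).tendsto.comp (hρ_tendsto v hv)
      have t2 : Tendsto (fun n => G' (v, η (ρ n v) ω)) atTop (𝓝 (G' (v, η v ω))) :=
        (hG'cont.tendsto _).comp (tendsto_const_nhds.prodMk_nhds t1)
      have t3 : Tendsto (fun n => H (κ n v, η v ω)) atTop (𝓝 (H (v, η v ω))) :=
        (hHcont.tendsto _).comp ((hκ_tendsto v hv).prodMk_nhds tendsto_const_nhds)
      have := ((t2.sub (tendsto_const_nhds (x := G' (v, η v ω)))).abs.add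
        ((t3.sub (tendsto_const_nhds (x := H (v, η v ω)))).abs))
      simpa [hφf_def] using this
    have key := vitali_l2 P (fun n ω => φf n v ω) hmeasn hlim (12 * ENNReal.ofReal C₂)
      (by finiteness) (fun n => hSQB n v hv)
    refine Tendsto.congr (fun n => ?_) key
    apply lintegral_congr
    intro ω
    rw [abs_of_nonneg (hφf_nonneg n v ω)]
  -- the double lintegral tends to 0
  set Ψ : ℕ → ℝ≥0∞ := fun n =>
    ∫⁻ ω, ∫⁻ v in Ioc u₁ u₂, ENNReal.ofReal (φf n v ω) ∂volume ∂P with hΨ_def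
  have hΨ0 : Tendsto Ψ atTop (𝓝 0) := by
    have hswap : ∀ n, Ψ n =
        ∫⁻ v in Ioc u₁ u₂, (∫⁻ ω, ENNReal.ofReal (φf n v ω) ∂P) ∂volume := by
      intro n
      rw [hΨ_def]
      exact lintegral_lintegral_swap
        ((ENNReal.measurable_ofReal.comp (hjm n)).aemeasurable)
    have hbound : ∀ n, ∀ᵐ v ∂(volume.restrict (Ioc u₁ u₂)),
        (∫⁻ ω, ENNReal.ofReal (φf n v ω) ∂P) ≤ 12 * ENNReal.ofReal C₂ + 1 := by
      intro n
      filter_upwards [ae_restrict_mem measurableSet_Ioc] with v hv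
      have hstep : ∀ ω, ENNReal.ofReal (φf n v ω) ≤
          ENNReal.ofReal ((φf n v ω) ^ 2) + 1 := by
        intro ω
        have h1 : φf n v ω ≤ (φf n v ω) ^ 2 + 1 := by
          nlinarith [sq_nonneg (φf n v ω - 1)]
        calc ENNReal.ofReal (φf n v ω) ≤ ENNReal.ofReal ((φf n v ω) ^ 2 + 1) :=
              ENNReal.ofReal_le_ofReal h1
          _ = ENNReal.ofReal ((φf n v ω) ^ 2) + 1 := by
              rw [ENNReal.ofReal_add (by positivity) zero_le_one, ENNReal.ofReal_one]
      calc (∫⁻ ω, ENNReal.ofReal (φf n v ω) ∂P)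
          ≤ ∫⁻ ω, (ENNReal.ofReal ((φf n v ω) ^ 2) + 1) ∂P := lintegral_mono hstep
        _ = (∫⁻ ω, ENNReal.ofReal ((φf n v ω) ^ 2) ∂P) + 1 := by
            rw [lintegral_add_right _ measurable_const, lintegral_const, measure_univ, mul_one]
        _ ≤ 12 * ENNReal.ofReal C₂ + 1 := add_le_add (hSQB n v hv) le_rfl
    have hFmeas : ∀ n, AEMeasurable
        (fun v => ∫⁻ ω, ENNReal.ofReal (φf n v ω) ∂P)
        (volume.restrict (Ioc u₁ u₂)) := by
      intro n
      have hq : Measurable fun q : ℝ × Ω => ENNReal.ofReal (φf n q.1 q.2) :=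
        (ENNReal.measurable_ofReal.comp (hjm n)).comp
          (measurable_snd.prodMk measurable_fst)
      exact (hq.lintegral_prod_right' (ν := P)).aemeasurable
    have hDCT := tendsto_lintegral_of_dominated_convergence'
      (μ := volume.restrict (Ioc u₁ u₂))
      (bound := fun _ => 12 * ENNReal.ofReal C₂ + 1) hFmeas hbound
      (by
        rw [lintegral_const, Measure.restrict_apply_univ, Real.volume_Ioc]
        finiteness)
      (by
        filter_upwards [ae_restrict_mem measurableSet_Ioc] with v hv
        exact hψ_tendsto v hv)
    rw [lintegral_zero] at hDCT
    exact Tendsto.congr (fun n => (hswap n).symm) hDCT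
  -- conclusion
  have h7 : ∀ n, ENNReal.ofReal (∫ ω, |(P[N u₂ - N u₁|ℱ u₁]) ω| ∂P) ≤ Ψ n := by
    intro n
    have hcongr : P[N u₂ - N u₁|ℱ u₁] =ᵐ[P] P[R n|ℱ u₁] := by
      calc P[N u₂ - N u₁|ℱ u₁]
          = P[(∑ k ∈ Finset.range (n+1), term n k) + R n|ℱ u₁] := by rw [hident n]
        _ =ᵐ[P] P[∑ k ∈ Finset.range (n+1), term n k|ℱ u₁] + P[R n|ℱ u₁] :=
            condExp_add (hsum_int n) (hR_int n) _
        _ =ᵐ[P] 0 + P[R n|ℱ u₁] := (hsum_cond n).add EventuallyEq.rfl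
        _ = P[R n|ℱ u₁] := by rw [zero_add]
    have e1 : ∫ ω, |(P[N u₂ - N u₁|ℱ u₁]) ω| ∂P = ∫ ω, |(P[R n|ℱ u₁]) ω| ∂P := by
      apply integral_congr_ae
      filter_upwards [hcongr] with ω hω
      rw [hω]
    have e2 : ∫ ω, |(P[R n|ℱ u₁]) ω| ∂P ≤ ∫ ω, |R n ω| ∂P := integral_abs_condExp_le _
    calc ENNReal.ofReal (∫ ω, |(P[N u₂ - N u₁|ℱ u₁]) ω| ∂P)
        = ENNReal.ofReal (∫ ω, |(P[R n|ℱ u₁]) ω| ∂P) := by rw [e1]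
      _ ≤ ENNReal.ofReal (∫ ω, |R n ω| ∂P) := ENNReal.ofReal_le_ofReal e2
      _ = ∫⁻ ω, ENNReal.ofReal (|R n ω|) ∂P :=
          ofReal_integral_eq_lintegral_ofReal (hR_int n).abs
            (Eventually.of_forall fun ω => abs_nonneg _)
      _ ≤ Ψ n := by
          rw [hΨ_def]
          apply lintegral_mono
          intro ω
          calc ENNReal.ofReal (|R n ω|)
              ≤ ENNReal.ofReal (∫ v in Ioc u₁ u₂, φf n v ω) :=
                ENNReal.ofReal_le_ofReal (hRbound n ω)
            _ = ∫⁻ v in Ioc u₁ u₂, ENNReal.ofReal (φf n v ω) ∂volume :=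
                ofReal_integral_eq_lintegral_ofReal (hφf_IntOn n ω)
                  (Eventually.of_forall fun v => hφf_nonneg n v ω)
  have hle : ENNReal.ofReal (∫ ω, |(P[N u₂ - N u₁|ℱ u₁]) ω| ∂P) ≤ 0 :=
    ge_of_tendsto hΨ0 (Eventually.of_forall h7)
  have hz : ∫ ω, |(P[N u₂ - N u₁|ℱ u₁]) ω| ∂P = 0 := by
    have h0 := le_antisymm hle (zero_le)
    rw [ENNReal.ofReal_eq_zero] at h0
    exact le_antisymm h0 (integral_nonneg fun ω => abs_nonneg _)
  have habs := (integral_eq_zero_iff_of_nonneg (fun ω => abs_nonneg _)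
    integrable_condExp.abs).mp hz
  filter_upwards [habs] with ω hω
  simpa using abs_eq_zero.mp hω

end StochasticChainRule
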